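/- Let (Z_r)_{r≥1} be a sequence in the formal power series ring ℚ[[t]], let U ∈ ℚ[[t]] be the multiplicative inverse of (1−t)², and suppose: (1−t)²·Z_1 = 1, (1−t)²·Z_2 = 1 + 3t², (1−t)²·Z_3 = 1 + 3t² + 4t³ + t⁴, and for every r ≥ 4, Z_r = Z_{r−1} + t²·(Z_{r−2} − Z_{r−3}) + (2t^r + 2t^{r+1})·U. Then for every r ≥ 2, (1−t)²·Z_r = 1 + 3t² + Σ_{i=3}^{r} ( (i+1)t^i + (i−2)t^{i+1} ). -/

import Mathlib

open PowerSeries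

/-- Recursion for the genus-2 generating functions implies the closed form. -/
theorem stmt_4 (Z : ℕ → PowerSeries ℚ) (U : PowerSeries ℚ)
    (hU : (1 - (X : PowerSeries ℚ)) ^ 2 * U = 1)
    (h1 : (1 - (X : PowerSeries ℚ)) ^ 2 * Z 1 = 1)
    (h2 : (1 - (X : PowerSeries ℚ)) ^ 2 * Z 2 = 1 + 3 * X ^ 2)
    (h3 : (1 - (X : PowerSeries ℚ)) ^ 2 * Z 3 = 1 + 3 * X ^ 2 + 4 * X ^ 3 + X ^ 4)
    (hrec : ∀ r : ℕ, 4 ≤ r →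
      Z r = Z (r - 1) + X ^ 2 * (Z (r - 2) - Z (r - 3))
            + (2 * X ^ r + 2 * X ^ (r + 1)) * U) :
    ∀ r : ℕ, 2 ≤ r →
      (1 - (X : PowerSeries ℚ)) ^ 2 * Z r =
        1 + 3 * X ^ 2
          + ∑ i ∈ Finset.Icc 3 r,
              (PowerSeries.C ((i : ℚ) + 1) * X ^ i
                + PowerSeries.C ((i : ℚ) - 2) * X ^ (i + 1)) := by
  have step : ∀ r : ℕ, 4 ≤ r →
      (1 - (X : PowerSeries ℚ)) ^ 2 * Z r =
        (1 - X) ^ 2 * Z (r - 1)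
          + X ^ 2 * ((1 - X) ^ 2 * Z (r - 2) - (1 - X) ^ 2 * Z (r - 3))
          + (2 * X ^ r + 2 * X ^ (r + 1)) := by
    intro r hr
    rw [hrec r hr]
    linear_combination (2 * (X : PowerSeries ℚ) ^ r + 2 * X ^ (r + 1)) * hU
  intro r
  induction r using Nat.strong_induction_on with
  | _ r ih =>
    intro hr
    match r with
    | 2 =>
      rw [Finset.Icc_eq_empty (by norm_num), Finset.sum_empty, add_zero]
      exact h2
    | 3 =>
      rw [Finset.Icc_self, Finset.sum_singleton, h3]
      norm_num [map_ofNat]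
      ring
    | 4 =>
      rw [step 4 (by norm_num)]
      norm_num [h1, h2, h3]
      rw [show Finset.Icc 3 4 = {3, 4} from rfl]
      simp [Finset.sum_insert, Finset.sum_singleton]
      norm_num [map_ofNat]
      ring
    | (n + 5) =>
      have i1 := ih (n + 4) (by omega) (by omega)
      have i2 := ih (n + 3) (by omega) (by omega)
      have i3 := ih (n + 2) (by omega) (by omega)
      rw [step (n + 5) (by omega)]
      have e1 : n + 5 - 1 = n + 4 := by omega
      have e2 : n + 5 - 2 = n + 3 := by omega
      have e3 : n + 5 - 3 = n + 2 := by omega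
      rw [e1, e2, e3, i1, i2, i3,
        Finset.sum_Icc_succ_top (by omega : 3 ≤ n + 5),
        Finset.sum_Icc_succ_top (by omega : 3 ≤ n + 3)]
      push_cast
      simp only [map_add, map_sub, map_one, map_ofNat]
      ring
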